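/- If a finite simplicial graph Γ contains an induced 4-cycle, then the right-angled Artin group G(Γ) contains a subgroup isomorphic to F₂ × F₂, the direct product of two free groups of rank 2. -/

import Mathlib

open scoped commutatorElement

/-- The set of defining relators of the right-angled Artin group of a graph. -/
def raagRels {V : Type*} (G : SimpleGraph V) : Set (FreeGroup V) :=
  {r | ∃ a b : V, G.Adj a b ∧ r = ⁅FreeGroup.of a, FreeGroup.of b⁆}

/-- The right-angled Artin group of a graph. -/
abbrev RAAG {V : Type*} (G : SimpleGraph V) : Type _ :=
  PresentedGroup (raagRels G)

theorem raag_commute_of_adj {V : Type*} (G : SimpleGraph V) {u v : V} (h : G.Adj u v) :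
    Commute (PresentedGroup.of (rels := raagRels G) u) (PresentedGroup.of v) := by
  rw [← commutatorElement_eq_one_iff_commute]
  have hmem : (⁅FreeGroup.of u, FreeGroup.of v⁆ : FreeGroup V) ∈
      Subgroup.normalClosure (raagRels G) :=
    Subgroup.subset_normalClosure ⟨u, v, h, rfl⟩
  have hone : ((QuotientGroup.mk' (Subgroup.normalClosure (raagRels G)))
      ⁅FreeGroup.of u, FreeGroup.of v⁆ : PresentedGroup (raagRels G)) = 1 :=
    (QuotientGroup.eq_one_iff _).2 hmem
  rw [map_commutatorElement] at hone
  exact hone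

/-- If Γ contains an induced 4-cycle, then G(Γ) contains a subgroup
isomorphic to F₂ × F₂. -/
theorem stmt11 {V : Type*} [Fintype V] (G : SimpleGraph V)
    (a b c d : V) (hab' : a ≠ b) (hac' : a ≠ c) (had' : a ≠ d)
    (hbc' : b ≠ c) (hbd' : b ≠ d) (hcd' : c ≠ d)
    (hab : G.Adj a b) (hbc : G.Adj b c) (hcd : G.Adj c d) (hda : G.Adj d a)
    (hac : ¬ G.Adj a c) (hbd : ¬ G.Adj b d) :
    ∃ H : Subgroup (RAAG G),
      Nonempty (H ≃* (FreeGroup (Fin 2) × FreeGroup (Fin 2))) := by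
  classical
  -- the target values of the retraction
  set φfun : V → FreeGroup (Fin 2) × FreeGroup (Fin 2) := fun v =>
    if v = a then (FreeGroup.of 0, 1)
    else if v = c then (FreeGroup.of 1, 1)
    else if v = b then (1, FreeGroup.of 0)
    else if v = d then (1, FreeGroup.of 1)
    else 1 with hφfun
  have hrel : ∀ r ∈ raagRels G, FreeGroup.lift φfun r = 1 := by
    rintro r ⟨u, v, huv, rfl⟩
    rw [map_commutatorElement, FreeGroup.lift_apply_of, FreeGroup.lift_apply_of,
      commutatorElement_eq_one_iff_commute, hφfun]
    simp only
    split_ifs <;> subst_vars <;>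
      first
        | exact absurd huv G.irrefl
        | exact absurd huv hac
        | exact absurd huv.symm hac
        | exact absurd huv hbd
        | exact absurd huv.symm hbd
        | (simp [commute_iff_eq, Prod.ext_iff])
  let φ : RAAG G →* FreeGroup (Fin 2) × FreeGroup (Fin 2) := PresentedGroup.toGroup hrel
  set A := PresentedGroup.of (rels := raagRels G) a with hA
  set B := PresentedGroup.of (rels := raagRels G) b with hB
  set C := PresentedGroup.of (rels := raagRels G) c with hC
  set D := PresentedGroup.of (rels := raagRels G) d with hD
  let f : FreeGroup (Fin 2) →* RAAG G :=
    FreeGroup.lift (fun i => if i = 0 then A else C)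
  let g : FreeGroup (Fin 2) →* RAAG G :=
    FreeGroup.lift (fun i => if i = 0 then B else D)
  have hAB : Commute A B := raag_commute_of_adj G hab
  have hAD : Commute A D := (raag_commute_of_adj G hda).symm
  have hCB : Commute C B := (raag_commute_of_adj G hbc).symm
  have hCD : Commute C D := raag_commute_of_adj G hcd
  have hg : ∀ (X : RAAG G), Commute X B → Commute X D →
      ∀ n, Commute X (g n) := by
    intro X hXB hXD n
    induction n using FreeGroup.induction_on with
    | C1 => simpa using Commute.one_right X
    | of i =>
        have : g (FreeGroup.of i) = if i = 0 then B else D := FreeGroup.lift_apply_of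
        rw [this]
        split_ifs <;> assumption
    | inv_of i hi => rw [map_inv]; exact hi.inv_right
    | mul x y hx hy => rw [map_mul]; exact hx.mul_right hy
  have hf : ∀ (Y : RAAG G), Commute A Y → Commute C Y →
      ∀ m, Commute (f m) Y := by
    intro Y hAY hCY m
    induction m using FreeGroup.induction_on with
    | C1 => simpa using Commute.one_left Y
    | of i =>
        have : f (FreeGroup.of i) = if i = 0 then A else C := FreeGroup.lift_apply_of
        rw [this]
        split_ifs <;> assumption
    | inv_of i hi => rw [map_inv]; exact hi.inv_left
    | mul x y hx hy => rw [map_mul]; exact hx.mul_left hy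
  have comm : ∀ m n, Commute (f m) (g n) := fun m n =>
    hg (f m) (hf B hAB hCB m) (hf D hAD hCD m) n
  let ψ : FreeGroup (Fin 2) × FreeGroup (Fin 2) →* RAAG G :=
    f.noncommCoprod g comm
  have hφof : ∀ v : V, φ (PresentedGroup.of v) = φfun v := fun v =>
    PresentedGroup.toGroup.of hrel
  have n1 : b ≠ a := hab'.symm
  have n2 : c ≠ a := hac'.symm
  have n3 : d ≠ a := had'.symm
  have n4 : c ≠ b := hbc'.symm
  have n5 : d ≠ b := hbd'.symm
  have n6 : d ≠ c := hcd'.symm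
  have h1 : φ.comp f = MonoidHom.inl (FreeGroup (Fin 2)) (FreeGroup (Fin 2)) := by
    refine FreeGroup.ext_hom _ _ fun i => ?_
    show φ (f (FreeGroup.of i)) = _
    rw [show f (FreeGroup.of i) = if i = 0 then A else C from FreeGroup.lift_apply_of]
    fin_cases i <;>
      simp [hA, hC, hφof, hφfun, hab', hac', had', hbc', hbd', hcd',
        n1, n2, n3, n4, n5, n6]
  have h2 : φ.comp g = MonoidHom.inr (FreeGroup (Fin 2)) (FreeGroup (Fin 2)) := by
    refine FreeGroup.ext_hom _ _ fun i => ?_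
    show φ (g (FreeGroup.of i)) = _
    rw [show g (FreeGroup.of i) = if i = 0 then B else D from FreeGroup.lift_apply_of]
    fin_cases i <;>
      simp [hB, hD, hφof, hφfun, hab', hac', had', hbc', hbd', hcd',
        n1, n2, n3, n4, n5, n6]
  have hcompval : ∀ x, φ (ψ x) = x := by
    rintro ⟨m, n⟩
    have hmn : ψ (m, n) = f m * g n := rfl
    rw [hmn, map_mul]
    have hm : φ (f m) = (m, 1) := by
      have := congrArg (fun h : FreeGroup (Fin 2) →* _ => h m) h1
      simpa using this
    have hn : φ (g n) = (1, n) := by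
      have := congrArg (fun h : FreeGroup (Fin 2) →* _ => h n) h2
      simpa using this
    rw [hm, hn, Prod.mk_mul_mk, mul_one, one_mul]
  have hinj : Function.Injective ψ := Function.LeftInverse.injective hcompval
  exact ⟨ψ.range, ⟨(MonoidHom.ofInjective hinj).symm⟩⟩
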